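/- Let K be a field, S = K[x_1,…,x_n], and let d ≥ 1 and s_1 ≤ s_2 ≤ ⋯ ≤ s_d, t_1 ≤ t_2 ≤ ⋯ ≤ t_d be integers in [1,n] with s_k ≤ t_k for k = 1,…,d. Then the product of monomial prime ideals P_{[s_1,t_1]}⋯P_{[s_d,t_d]} equals the ideal of S generated by all monomials x^u with u ∈ ℕ^n such that u_1+⋯+u_n = d and, for every i ∈ [1,n], the inequalities #{k ∈ [1,d] : t_k ≤ i} ≤ u_1+⋯+u_i ≤ #{k ∈ [1,d] : s_k ≤ i} hold. -/

import Mathlib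

open Finset MvPolynomial

/-- The monomial prime ideal `P_{[s,t]} = (x_s, …, x_t)`. -/
noncomputable def Pst {n : ℕ} (K : Type*) [Field K] (s t : Fin n) : Ideal (MvPolynomial (Fin n) K) :=
  Ideal.span ((fun i => (X i : MvPolynomial (Fin n) K)) '' {i | s ≤ i ∧ i ≤ t})

private lemma aux_prefix_count {n d : ℕ} (g : Fin d → Fin n) (i : Fin n) :
    (Finset.univ.filter fun k => g k ≤ i).card
      = ∑ j ∈ Finset.Iic i, (Finset.univ.filter fun k => g k = j).card := by
  rw [Finset.card_eq_sum_card_fiberwise (f := g) (t := Finset.Iic i)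
    (fun k hk => Finset.mem_Iic.mpr (Finset.mem_filter.mp hk).2)]
  refine Finset.sum_congr rfl fun j hj => ?_
  congr 1
  ext k
  simp only [Finset.mem_filter, Finset.mem_univ, true_and]
  constructor
  · rintro ⟨_, h⟩; exact h
  · rintro h; exact ⟨h ▸ Finset.mem_Iic.mp hj, h⟩

private lemma aux_prefix_ext {n : ℕ} (u v : Fin n → ℕ)
    (h : ∀ i, ∑ j ∈ Finset.Iic i, u j = ∑ j ∈ Finset.Iic i, v j) : u = v := by
  have key : ∀ m : ℕ, ∀ hm : m < n, u ⟨m, hm⟩ = v ⟨m, hm⟩ := by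
    intro m
    induction m using Nat.strong_induction_on with
    | _ m ih =>
      intro hm
      have h1 := h ⟨m, hm⟩
      rw [← Finset.Iio_insert, Finset.sum_insert (by simp),
        Finset.sum_insert (by simp)] at h1
      have h2 : ∑ j ∈ Finset.Iio (⟨m, hm⟩ : Fin n), u j
          = ∑ j ∈ Finset.Iio (⟨m, hm⟩ : Fin n), v j := by
        refine Finset.sum_congr rfl fun j hj => ?_
        have hjm : (j : ℕ) < m := Fin.lt_def.mp (Finset.mem_Iio.mp hj)
        have := ih j hjm j.isLt
        simpa using this
      omega
  funext i
  have := key i.val i.isLt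
  simpa using this

private lemma aux_card_val_lt {d m : ℕ} (hm : m ≤ d) :
    (Finset.univ.filter fun k : Fin d => (k : ℕ) < m).card = m := by
  have h := Finset.card_bij (t := Finset.range m)
    (fun (k : Fin d) (_ : k ∈ Finset.univ.filter fun k : Fin d => (k : ℕ) < m) => (k : ℕ))
    ?_ ?_ ?_
  · rw [h, Finset.card_range]
  · intro k hk
    exact Finset.mem_range.mpr (Finset.mem_filter.mp hk).2
  · intro a ha b hb hab
    exact Fin.val_injective hab
  · intro j hj
    have hjm : j < m := Finset.mem_range.mp hj
    exact ⟨⟨j, lt_of_lt_of_le hjm hm⟩, Finset.mem_filter.mpr ⟨Finset.mem_univ _, hjm⟩, rfl⟩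

/-- the product `P_{[s_1,t_1]} ⋯ P_{[s_d,t_d]}` (with `s` and `t`
nondecreasing and `s_k ≤ t_k`) is generated by the monomials `x^u` with
`|u| = d` and `#{k : t_k ≤ i} ≤ u_1 + ⋯ + u_i ≤ #{k : s_k ≤ i}` for all `i`. -/
theorem prod_interval_primes_eq_latticePath_ideal
    {n d : ℕ} (K : Type*) [Field K] (hd : 1 ≤ d)
    (s t : Fin d → Fin n) (hs : Monotone s) (ht : Monotone t)
    (hst : ∀ k, s k ≤ t k) :
    (∏ k : Fin d, Pst K (s k) (t k)) =
      Ideal.span { m : MvPolynomial (Fin n) K |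
        ∃ u : Fin n → ℕ,
          (∑ i, u i = d) ∧
          (∀ i : Fin n,
            (Finset.univ.filter (fun k : Fin d => t k ≤ i)).card ≤ ∑ j ∈ Finset.Iic i, u j ∧
            (∑ j ∈ Finset.Iic i, u j) ≤ (Finset.univ.filter (fun k : Fin d => s k ≤ i)).card) ∧
          m = ∏ i, (X i : MvPolynomial (Fin n) K) ^ u i } := by
  have hn : 0 < n := (s ⟨0, hd⟩).pos
  simp only [Pst]
  rw [Ideal.prod_span]
  congr 1
  ext a
  constructor
  · -- forward : a product of variables gives such a monomial
    intro ha
    rw [Set.mem_fintype_prod] at ha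
    obtain ⟨g', hg', hprod⟩ := ha
    choose g hg1 hg2 using fun k => (hg' k : g' k ∈ _)
    -- hg1 : s k ≤ g k ∧ g k ≤ t k ; hg2 : X (g k) = g' k
    refine ⟨fun i => (Finset.univ.filter fun k => g k = i).card, ?_, ?_, ?_⟩
    · rw [← Finset.card_eq_sum_card_fiberwise (f := g) (t := Finset.univ)
        (fun k _ => Finset.mem_univ _)]
      simp
    · intro i
      rw [← aux_prefix_count g i]
      constructor
      · apply Finset.card_le_card
        intro k hk
        have := (Finset.mem_filter.mp hk).2
        exact Finset.mem_filter.mpr ⟨Finset.mem_univ _, le_trans (hg1 k).2 this⟩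
      · apply Finset.card_le_card
        intro k hk
        have := (Finset.mem_filter.mp hk).2
        exact Finset.mem_filter.mpr ⟨Finset.mem_univ _, le_trans (hg1 k).1 this⟩
    · rw [← hprod]
      rw [← Finset.prod_fiberwise_of_maps_to (g := g) (t := Finset.univ)
        (fun k _ => Finset.mem_univ _) g']
      refine Finset.prod_congr rfl fun i _ => ?_
      rw [← Finset.prod_const]
      refine Finset.prod_congr rfl fun k hk => ?_
      have := (Finset.mem_filter.mp hk).2
      rw [← hg2 k, this]
  · -- backward : every such monomial is a product of variables
    rintro ⟨u, hsum, hu, rfl⟩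
    set P : Fin n → ℕ := fun i => ∑ j ∈ Finset.Iic i, u j with hP
    have hPmono : Monotone P := fun i j hij =>
      Finset.sum_le_sum_of_subset (Finset.Iic_subset_Iic.mpr hij)
    have hPle : ∀ i, P i ≤ d := fun i =>
      hsum ▸ Finset.sum_le_sum_of_subset (Finset.subset_univ _)
    set i₀ : Fin n := ⟨n - 1, by omega⟩ with hi₀
    have hPtop : P i₀ = d := by
      rw [hP, ← hsum]
      apply Finset.sum_congr _ (fun _ _ => rfl)
      ext j
      simp only [Finset.mem_Iic, Finset.mem_univ, iff_true]
      have hj := j.isLt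
      exact Fin.le_def.mpr (show (j : ℕ) ≤ n - 1 by omega)
    have hne : ∀ k : Fin d, (Finset.univ.filter fun i => (k : ℕ) < P i).Nonempty :=
      fun k => ⟨i₀, Finset.mem_filter.mpr ⟨Finset.mem_univ _, by rw [hPtop]; exact k.isLt⟩⟩
    set g : Fin d → Fin n := fun k => (Finset.univ.filter fun i => (k : ℕ) < P i).min' (hne k)
      with hgdef
    have hgiff : ∀ (k : Fin d) (i : Fin n), g k ≤ i ↔ (k : ℕ) < P i := by
      intro k i
      constructor
      · intro h
        have hmem := (Finset.univ.filter fun i => (k : ℕ) < P i).min'_mem (hne k)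
        have : (k : ℕ) < P (g k) := (Finset.mem_filter.mp hmem).2
        exact lt_of_lt_of_le this (hPmono h)
      · intro h
        exact Finset.min'_le (Finset.univ.filter fun i : Fin n => (k : ℕ) < P i) i
          (Finset.mem_filter.mpr ⟨Finset.mem_univ _, h⟩)
    have hgs : ∀ k, s k ≤ g k := by
      intro k
      by_contra hcon
      push_neg at hcon
      have h1 : (k : ℕ) < P (g k) := (hgiff k (g k)).mp le_rfl
      have h2 : P (g k) ≤ (Finset.univ.filter fun j => s j ≤ g k).card := (hu (g k)).2
      have h3 : (Finset.univ.filter fun j => s j ≤ g k).card ≤ (k : ℕ) := by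
        rw [← Fin.card_Iio k]
        apply Finset.card_le_card
        intro j hj
        have hj2 : s j ≤ g k := (Finset.mem_filter.mp hj).2
        rw [Finset.mem_Iio]
        by_contra hjk
        push_neg at hjk
        exact absurd (le_trans (hs hjk) hj2) (not_le.mpr hcon)
      omega
    have hgt : ∀ k, g k ≤ t k := by
      intro k
      by_contra hcon
      push_neg at hcon
      have h1 : P (t k) ≤ (k : ℕ) := by
        by_contra h
        push_neg at h
        exact absurd ((hgiff k (t k)).mpr h) (not_le.mpr hcon)
      have h2 : (Finset.univ.filter fun j => t j ≤ t k).card ≤ P (t k) := (hu (t k)).1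
      have h3 : (k : ℕ) + 1 ≤ (Finset.univ.filter fun j => t j ≤ t k).card := by
        rw [← Fin.card_Iic k]
        apply Finset.card_le_card
        intro j hj
        exact Finset.mem_filter.mpr ⟨Finset.mem_univ _, ht (Finset.mem_Iic.mp hj)⟩
      omega
    have hfiber : (fun i => (Finset.univ.filter fun k => g k = i).card) = u := by
      apply aux_prefix_ext
      intro i
      rw [← aux_prefix_count g i]
      have : (Finset.univ.filter fun k : Fin d => g k ≤ i)
          = (Finset.univ.filter fun k : Fin d => (k : ℕ) < P i) := by
        ext k
        simp only [Finset.mem_filter, Finset.mem_univ, true_and]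
        exact hgiff k i
      rw [this, aux_card_val_lt (hPle i)]
    rw [Set.mem_fintype_prod]
    refine ⟨fun k => X (g k), fun k => ⟨g k, ⟨hgs k, hgt k⟩, rfl⟩, ?_⟩
    rw [← Finset.prod_fiberwise_of_maps_to (g := g) (t := Finset.univ)
      (fun k _ => Finset.mem_univ _) (fun k => (X (g k) : MvPolynomial (Fin n) K))]
    refine Finset.prod_congr rfl fun i _ => ?_
    have : ∏ k ∈ Finset.univ.filter fun k => g k = i, (X (g k) : MvPolynomial (Fin n) K)
        = X i ^ (Finset.univ.filter fun k => g k = i).card := by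
      rw [← Finset.prod_const]
      refine Finset.prod_congr rfl fun k hk => ?_
      rw [(Finset.mem_filter.mp hk).2]
    rw [this, congrFun hfiber i]
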